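/- Let 𝒳 = {{1,4,5},{2,4,5},{1,6,7},{2,6,7},{1,2,3}} on ground set [7]. Then the unique minimal 𝒳-matroid is the uniform matroid U_{2,7}, but val_𝒳([7]) = 3, so val_𝒳 is not the rank function of the unique minimal 𝒳-matroid. In particular, the converse of the Jackson–Tanigawa lemma (that uniqueness of the minimal 𝒳-matroid implies val_𝒳 is the rank function) fails. -/

import Mathlib

open Finset

variable {d : ℕ}

/-- A proper 𝒳-sequence: a list of members of 𝒳, each not contained in the union
of the preceding ones. -/
def ProperSeq (𝒳 : Finset (Finset (Fin d))) (l : List (Finset (Fin d))) : Prop :=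
  (∀ x ∈ l, x ∈ 𝒳) ∧ ∀ (i : ℕ) (hi : i < l.length), 1 ≤ i →
    ¬ l.get ⟨i, hi⟩ ⊆ (l.take i).foldr (· ∪ ·) ∅

/-- `val(F, S) = |F ∪ X₁ ∪ ⋯ ∪ X_k| − k`. -/
def seqVal (F : Finset (Fin d)) (l : List (Finset (Fin d))) : ℤ :=
  ((F ∪ l.foldr (· ∪ ·) ∅).card : ℤ) - l.length

/-- `val_𝒳(F)`: the minimum of `val(F,S)` over proper 𝒳-sequences `S`. -/
noncomputable def valX (𝒳 : Finset (Finset (Fin d))) (F : Finset (Fin d)) : ℤ :=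
  sInf {v : ℤ | ∃ l : List (Finset (Fin d)), ProperSeq 𝒳 l ∧ v = seqVal F l}

/-- Condition (i) applies to `v`. -/
def Cond1 (𝒳 : Finset (Finset (Fin d))) (v : Finset (Fin d) → ℤ) : Prop :=
  ∃ A B x : Finset (Fin d), x ∈ 𝒳 ∧ A ∩ B ⊆ x ∧
    v (A ∪ B) > v A + v B - min ((A ∩ B).card : ℤ) ((x.card : ℤ) - 1)

/-- Condition (ii) applies to `v`. -/
def Cond2 (v : Finset (Fin d) → ℤ) : Prop :=
  ∃ A B : Finset (Fin d), A ⊂ B ∧ v A > v B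

/-- Condition (iii) applies to `v`. -/
def Cond3 (v : Finset (Fin d) → ℤ) : Prop :=
  ∃ A B : Finset (Fin d), B ⊂ A ∧ v A > v B + ((A \ B).card : ℤ)

/-- One refinement step of the procedure (with the stated priorities). -/
def RefStep (𝒳 : Finset (Finset (Fin d))) (v w : Finset (Fin d) → ℤ) : Prop :=
  (∃ A B x : Finset (Fin d), x ∈ 𝒳 ∧ A ∩ B ⊆ x ∧
      v (A ∪ B) > v A + v B - min ((A ∩ B).card : ℤ) ((x.card : ℤ) - 1) ∧
      w = Function.update v (A ∪ B)
        (v A + v B - min ((A ∩ B).card : ℤ) ((x.card : ℤ) - 1))) ∨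
  (¬ Cond1 𝒳 v ∧ ∃ A B : Finset (Fin d), A ⊂ B ∧ v A > v B ∧
      w = Function.update v A (v B)) ∨
  (¬ Cond1 𝒳 v ∧ ¬ Cond2 v ∧ ∃ A B : Finset (Fin d), B ⊂ A ∧
      v A > v B + ((A \ B).card : ℤ) ∧
      w = Function.update v A (v B + ((A \ B).card : ℤ)))

/-- `v` is stable: no refinement step applies. -/
def Stable (𝒳 : Finset (Finset (Fin d))) (v : Finset (Fin d) → ℤ) : Prop :=
  ¬ Cond1 𝒳 v ∧ ¬ Cond2 v ∧ ¬ Cond3 v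

/-- `v` is an outcome of the refinement procedure started at `val_𝒳`. -/
def IsRefinedVal (𝒳 : Finset (Finset (Fin d))) (v : Finset (Fin d) → ℤ) : Prop :=
  Relation.ReflTransGen (RefStep 𝒳) (valX 𝒳) v ∧ Stable 𝒳 v

/-- `C` is a circuit of `M`: a minimal dependent set. -/
def IsCircuitOf (M : Matroid (Fin d)) (C : Set (Fin d)) : Prop :=
  M.Dep C ∧ ∀ D : Set (Fin d), D ⊂ C → ¬ M.Dep D

/-- An 𝒳-matroid: a matroid (on the full ground set) in which every member of 𝒳
is a circuit. -/
def IsXMatroid (𝒳 : Finset (Finset (Fin d))) (M : Matroid (Fin d)) : Prop :=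
  M.E = Set.univ ∧ ∀ x ∈ 𝒳, IsCircuitOf M ↑x

/-- `v` is the rank function of the matroid `M`. -/
def IsRankFnOf (M : Matroid (Fin d)) (v : Finset (Fin d) → ℤ) : Prop :=
  ∀ F : Finset (Fin d),
    (∃ I : Finset (Fin d), I ⊆ F ∧ M.Indep ↑I ∧ (I.card : ℤ) = v F) ∧
    ∀ I : Finset (Fin d), I ⊆ F → M.Indep ↑I → (I.card : ℤ) ≤ v F

/-- Dependency order on matroids. -/
def depLE (M N : Matroid (Fin d)) : Prop :=
  ∀ S : Set (Fin d), M.Dep S → N.Dep S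

/-- The counterexample family 𝒳 on the ground set `[7]` (with `7` encoded as `0`). -/
def X₀ : Finset (Finset (Fin 7)) :=
  {{1, 4, 5}, {2, 4, 5}, {1, 6, 0}, {2, 6, 0}, {1, 2, 3}}


section AuxStmt8

open Matroid in
instance (𝒳 : Finset (Finset (Fin d))) (l : List (Finset (Fin d))) :
    Decidable (ProperSeq 𝒳 l) := by
  unfold ProperSeq; infer_instance

/-- The members of `X₀` as a list. -/
def L₀stmt8 : List (Finset (Fin 7)) := [{1,4,5}, {2,4,5}, {1,6,0}, {2,6,0}, {1,2,3}]

set_option maxRecDepth 100000 in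
lemma no_perm_proper_stmt8 : ∀ l ∈ L₀stmt8.permutations', ¬ ProperSeq X₀ l := by decide

lemma foldr_union_subset_stmt8 {x : Finset (Fin 7)} {L : List (Finset (Fin 7))} (hx : x ∈ L) :
    x ⊆ L.foldr (· ∪ ·) ∅ := by
  induction L with
  | nil => simp at hx
  | cons a t ih =>
    rcases List.mem_cons.1 hx with rfl | h
    · exact Finset.subset_union_left
    · exact (ih h).trans Finset.subset_union_right

lemma proper_length_le_stmt8 (l : List (Finset (Fin 7))) (hl : ProperSeq X₀ l) :
    l.length ≤ 4 := by
  have hkey : ∀ (i j : ℕ) (hi : i < l.length) (hj : j < l.length), i < j →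
      l.get ⟨i, hi⟩ ≠ l.get ⟨j, hj⟩ := by
    intro i j hi hj hij heq
    apply hl.2 j hj (by omega)
    rw [← heq]
    apply foldr_union_subset_stmt8
    have : (l.take j).get ⟨i, by simp [List.length_take]; omega⟩ = l.get ⟨i, hi⟩ := by
      simp [List.getElem_take]
    rw [← this]
    exact List.get_mem _ _
  have hnd : l.Nodup := by
    rw [List.nodup_iff_injective_get]
    intro i j heq
    by_contra hne
    have hne' : (i : ℕ) ≠ (j : ℕ) := fun h => hne (Fin.ext h)
    rcases lt_or_gt_of_ne hne' with h | h
    · exact hkey i j i.isLt j.isLt h heq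
    · exact hkey j i j.isLt i.isLt h heq.symm
  have hsubL : l ⊆ L₀stmt8 := by
    intro x hx
    have hxX := hl.1 x hx
    simp only [X₀, Finset.mem_insert, Finset.mem_singleton] at hxX
    rcases hxX with rfl|rfl|rfl|rfl|rfl <;> simp [L₀stmt8]
  have hsp : l.Subperm L₀stmt8 := hnd.subperm hsubL
  have hle : l.length ≤ 5 := by simpa [L₀stmt8] using hsp.length_le
  rcases Nat.lt_or_ge l.length 5 with h4 | h5
  · omega
  · exfalso
    have hperm : l.Perm L₀stmt8 := hsp.perm_of_length_le (by simp [L₀stmt8]; omega)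
    exact no_perm_proper_stmt8 l (List.mem_permutations'.2 hperm) hl

set_option maxRecDepth 100000 in
lemma valX_univ_stmt8 : valX X₀ (Finset.univ : Finset (Fin 7)) = 3 := by
  have hmem : (3:ℤ) ∈ {v : ℤ | ∃ l : List (Finset (Fin 7)),
      ProperSeq X₀ l ∧ v = seqVal Finset.univ l} :=
    ⟨[{1,4,5}, {2,4,5}, {1,6,0}, {1,2,3}], by decide, by decide⟩
  have hlb : ∀ v ∈ {v : ℤ | ∃ l : List (Finset (Fin 7)),
      ProperSeq X₀ l ∧ v = seqVal Finset.univ l}, (3:ℤ) ≤ v := by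
    rintro v ⟨l, hl, rfl⟩
    have hlen := proper_length_le_stmt8 l hl
    have hv : seqVal (Finset.univ : Finset (Fin 7)) l = 7 - l.length := by
      rw [seqVal, Finset.union_eq_left.2 (Finset.subset_univ _), Finset.card_univ,
        Fintype.card_fin]
      norm_num
    rw [hv]
    omega
  exact le_antisymm (csInf_le ⟨3, hlb⟩ hmem) (le_csInf ⟨3, hmem⟩ hlb)

lemma card3_circuit_stmt8 (U : Matroid (Fin 7)) (hUE : U.E = Set.univ)
    (hU : ∀ S : Set (Fin 7), U.Indep S ↔ S.ncard ≤ 2)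
    (x : Finset (Fin 7)) (hx : x.card = 3) : IsCircuitOf U ↑x := by
  constructor
  · refine ⟨fun hI => ?_, by rw [hUE]; exact Set.subset_univ _⟩
    have := (hU _).1 hI
    rw [Set.ncard_coe_finset, hx] at this
    omega
  · intro D hD hdep
    have hlt : D.ncard < 3 := by
      have := Set.ncard_lt_ncard hD (Set.toFinite _)
      rwa [Set.ncard_coe_finset, hx] at this
    exact hdep.not_indep ((hU D).2 (by omega))

lemma key_dep_stmt8 {N : Matroid (Fin 7)} (hE : N.E = Set.univ) {a b c e : Fin 7}
    (hea : e ≠ a) (heb : e ≠ b)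
    (hbc : N.Indep {b, c}) (h1 : N.Dep {a, b, c}) (h2 : N.Dep {e, b, c}) :
    N.Dep {a, e, b} := by
  have hsub : ∀ S : Set (Fin 7), S ⊆ N.E := fun S => by
    rw [hE]; exact Set.subset_univ _
  refine ⟨fun hInd => ?_, hsub _⟩
  have hab : N.Indep {a, b} := hInd.subset (by intro y hy; simp at hy ⊢; tauto)
  have hc : c ∈ N.closure {a, b} := by
    rw [hab.mem_closure_iff]
    left
    have h : (insert c {a, b} : Set (Fin 7)) = {a, b, c} := by ext y; simp; tauto
    rwa [h]
  have he' : e ∈ N.closure {b, c} := by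
    rw [hbc.mem_closure_iff]
    left
    exact h2
  have hmono : N.closure ({b, c} : Set (Fin 7)) ⊆ N.closure {a, b} := by
    have h1' : N.closure ({b, c} : Set (Fin 7)) ⊆ N.closure {a, b, c} :=
      N.closure_subset_closure (by intro y hy; simp at hy ⊢; tauto)
    have h2' : ({a, b, c} : Set (Fin 7)) = insert c {a, b} := by ext y; simp; tauto
    rwa [h2', Matroid.closure_insert_eq_of_mem_closure hc] at h1'
  have heab : e ∈ N.closure {a, b} := hmono he'
  have hdiff : ({a, e, b} : Set (Fin 7)) \ {e} = {a, b} := by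
    ext y
    simp only [Set.mem_diff, Set.mem_insert_iff, Set.mem_singleton_iff]
    constructor
    · rintro ⟨rfl | rfl | rfl, hne⟩
      · exact Or.inl rfl
      · exact absurd rfl hne
      · exact Or.inr rfl
    · rintro (rfl | rfl)
      · exact ⟨Or.inl rfl, fun h => hea h.symm⟩
      · exact ⟨Or.inr (Or.inr rfl), fun h => heb h.symm⟩
  exact (Matroid.indep_iff_forall_notMem_closure_diff (hsub _)).1 hInd
    (show e ∈ ({a, e, b} : Set (Fin 7)) by simp) (by rw [hdiff]; exact heab)

lemma unique_min_stmt8 (U : Matroid (Fin 7)) (hUE : U.E = Set.univ)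
    (hU : ∀ S : Set (Fin 7), U.Indep S ↔ S.ncard ≤ 2)
    (N : Matroid (Fin 7)) (hN : IsXMatroid X₀ N) : depLE U N := by
  obtain ⟨hNE, hNC⟩ := hN
  have hsub : ∀ S : Set (Fin 7), S ⊆ N.E := fun S => by
    rw [hNE]; exact Set.subset_univ _
  have h145 : IsCircuitOf N {1, 4, 5} := by simpa using hNC {1,4,5} (by decide)
  have h245 : IsCircuitOf N {2, 4, 5} := by simpa using hNC {2,4,5} (by decide)
  have h160 : IsCircuitOf N {1, 6, 0} := by simpa using hNC {1,6,0} (by decide)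
  have h260 : IsCircuitOf N {2, 6, 0} := by simpa using hNC {2,6,0} (by decide)
  have h123 : IsCircuitOf N {1, 2, 3} := by simpa using hNC {1,2,3} (by decide)
  have indep_of_ss : ∀ {C D : Set (Fin 7)}, IsCircuitOf N C → D ⊂ C → N.Indep D :=
    fun hC hD => Matroid.indep_of_not_dep (hC.2 _ hD) (hsub _)
  have hss : ∀ (u v w : Fin 7), u ∉ ({v, w} : Set (Fin 7)) →
      ({v, w} : Set (Fin 7)) ⊂ {u, v, w} := by
    intro u v w hu
    refine ⟨by intro y hy; simp at hy ⊢; tauto, fun hsub' => hu (hsub' (by simp))⟩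
  have i45 : N.Indep {4, 5} := indep_of_ss h145 (hss 1 4 5 (by simp))
  have i54 : N.Indep {5, 4} := i45.subset (by intro y hy; simp at hy ⊢; tauto)
  have i60 : N.Indep {6, 0} := indep_of_ss h160 (hss 1 6 0 (by simp))
  have i06 : N.Indep {0, 6} := i60.subset (by intro y hy; simp at hy ⊢; tauto)
  have i12 : N.Indep {1, 2} := indep_of_ss h123 (by
    refine ⟨by intro y hy; simp at hy ⊢; tauto, fun hsub' => ?_⟩
    have := hsub' (show (3 : Fin 7) ∈ ({1,2,3} : Set (Fin 7)) by simp)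
    simp at this)
  have eqset : ∀ {s t : Set (Fin 7)}, s = t → N.Dep t → N.Dep s := fun h hd => h ▸ hd
  have d4 : N.Dep {1, 2, 4} :=
    key_dep_stmt8 hNE (by decide) (by decide) i45 h145.1 h245.1
  have d5 : N.Dep {1, 2, 5} := by
    have h1 : N.Dep {1, 5, 4} := eqset (by ext y; simp; tauto) h145.1
    have h2 : N.Dep {2, 5, 4} := eqset (by ext y; simp; tauto) h245.1
    exact key_dep_stmt8 hNE (by decide) (by decide) i54 h1 h2
  have d6 : N.Dep {1, 2, 6} :=
    key_dep_stmt8 hNE (by decide) (by decide) i60 h160.1 h260.1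
  have d0 : N.Dep {1, 2, 0} := by
    have h1 : N.Dep {1, 0, 6} := eqset (by ext y; simp; tauto) h160.1
    have h2 : N.Dep {2, 0, 6} := eqset (by ext y; simp; tauto) h260.1
    exact key_dep_stmt8 hNE (by decide) (by decide) i06 h1 h2
  have hins : ∀ y : Fin 7, N.Dep (insert y {1, 2}) → y ∈ N.closure {1, 2} :=
    fun y h => (i12.mem_closure_iff).2 (Or.inl h)
  have hcl : N.E ⊆ N.closure {1, 2} := by
    rw [hNE]
    intro e _
    fin_cases e
    · exact hins 0 (eqset (by ext y; simp; tauto) d0)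
    · exact N.mem_closure_of_mem (by simp) (hsub _)
    · exact N.mem_closure_of_mem (by simp) (hsub _)
    · exact hins 3 (eqset (by ext y; simp; tauto) h123.1)
    · exact hins 4 (eqset (by ext y; simp; tauto) d4)
    · exact hins 5 (eqset (by ext y; simp; tauto) d5)
    · exact hins 6 (eqset (by ext y; simp; tauto) d6)
  have hbase : N.IsBase {1, 2} := i12.isBase_of_ground_subset_closure hcl
  intro S hS
  have hge3 : ¬ S.ncard ≤ 2 := fun h => hS.1 ((hU S).2 h)
  refine ⟨fun hI => hge3 ?_, hsub S⟩
  obtain ⟨B, hB, hSB⟩ := hI.exists_isBase_superset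
  have hBcard : B.encard = 2 := by
    rw [hB.encard_eq_encard_of_isBase hbase]
    exact Set.encard_pair (by decide)
  have h' : S.encard ≤ 2 := hBcard ▸ Set.encard_mono hSB
  have hiff := Set.encard_le_coe_iff_finite_ncard_le (s := S) (k := 2)
  exact (hiff.1 (by exact_mod_cast h')).2

end AuxStmt8

theorem stmt8 (U : Matroid (Fin 7)) (hUE : U.E = Set.univ)
    (hU : ∀ S : Set (Fin 7), U.Indep S ↔ S.ncard ≤ 2) :
    -- `U_{2,7}` is an 𝒳-matroid, and it is the unique minimal one:
    IsXMatroid X₀ U ∧ (∀ N : Matroid (Fin 7), IsXMatroid X₀ N → depLE U N) ∧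
    -- yet `val_𝒳([7]) = 3`,
    valX X₀ Finset.univ = 3 ∧
    -- so `val_𝒳` is not the rank function of the unique minimal 𝒳-matroid:
    ¬ IsRankFnOf U (valX X₀) := by
  refine ⟨⟨hUE, fun x hx => card3_circuit_stmt8 U hUE hU x ?_⟩,
    fun N hN => unique_min_stmt8 U hUE hU N hN, valX_univ_stmt8, ?_⟩
  · simp only [X₀, Finset.mem_insert, Finset.mem_singleton] at hx
    rcases hx with rfl|rfl|rfl|rfl|rfl <;> decide
  · intro h
    obtain ⟨I, hIsub, hIind, hIcard⟩ := (h Finset.univ).1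
    rw [valX_univ_stmt8] at hIcard
    have h2 : (↑I : Set (Fin 7)).ncard ≤ 2 := (hU _).1 hIind
    rw [Set.ncard_coe_finset] at h2
    omega
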